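/- Let 𝒳 be a finite nonempty set and n ≥ 1. Let Z, W, Y₁,…,Yₙ, A be random variables, each taking finitely many values on a common finite probability space, such that: (i) Z is uniformly distributed over 𝒳; (ii) W is independent of Z; (iii) Y₁,…,Yₙ are mutually conditionally independent given the pair (Z,W); (iv) A = g(Y₁,…,Yₙ,W) for some (deterministic) function g, A takes values in 𝒳, and Pr[A = Z] ≥ 3/4. Then there exists an index i ∈ {1,…,n} such that I((Yᵢ,W);Z) ≥ (1/n)·((3/4)·log₂|𝒳| − 1). -/

import Mathlib

open scoped Classical
open Finset

/-- Probability of an event `E` under a weight function `p` on a finite sample space. -/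
noncomputable def prEv {Ω : Type*} [Fintype Ω] (p : Ω → ℝ) (E : Ω → Prop) : ℝ :=
  ∑ ω, if E ω then p ω else 0

/-- Shannon entropy (base 2) of a random variable `X` on a finite probability space,
with the convention `0 · log₂ 0 = 0` (automatic since `Real.logb 2 0 = 0`). -/
noncomputable def ent {Ω S : Type*} [Fintype Ω] [Fintype S] (p : Ω → ℝ) (X : Ω → S) : ℝ :=
  -∑ s : S, prEv p (fun ω => X ω = s) * Real.logb 2 (prEv p (fun ω => X ω = s))

/-- Conditional Shannon entropy `H(X|Y)` (base 2). -/
noncomputable def condEnt {Ω S T : Type*} [Fintype Ω] [Fintype S] [Fintype T]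
    (p : Ω → ℝ) (X : Ω → S) (Y : Ω → T) : ℝ :=
  -∑ s : S, ∑ t : T, prEv p (fun ω => X ω = s ∧ Y ω = t) *
      Real.logb 2 (prEv p (fun ω => X ω = s ∧ Y ω = t) / prEv p (fun ω => Y ω = t))

/-- Mutual information `I(X;Y) = H(X) - H(X|Y)`. -/
noncomputable def mi {Ω S T : Type*} [Fintype Ω] [Fintype S] [Fintype T]
    (p : Ω → ℝ) (X : Ω → S) (Y : Ω → T) : ℝ :=
  ent p X - condEnt p X Y

/-- Conditional mutual information `I(X;Y|Z) = H(X|Z) - H(X|(Y,Z))`. -/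
noncomputable def cmi {Ω S T U : Type*} [Fintype Ω] [Fintype S] [Fintype T] [Fintype U]
    (p : Ω → ℝ) (X : Ω → S) (Y : Ω → T) (Z : Ω → U) : ℝ :=
  condEnt p X Z - condEnt p X (fun ω => (Y ω, Z ω))

section PrEv
variable {Ω : Type*} [Fintype Ω] {p : Ω → ℝ}

lemma prEv_nonneg (hp : ∀ ω, 0 ≤ p ω) (E : Ω → Prop) : 0 ≤ prEv p E := by
  apply Finset.sum_nonneg; intro ω _; split <;> simp [hp ω]

lemma prEv_mono (hp : ∀ ω, 0 ≤ p ω) {E F : Ω → Prop} (h : ∀ ω, E ω → F ω) :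
    prEv p E ≤ prEv p F := by
  apply Finset.sum_le_sum; intro ω _
  by_cases hE : E ω
  · simp [hE, h ω hE]
  · simp only [hE, if_false]; split <;> simp [hp ω]

lemma prEv_congr {E F : Ω → Prop} (h : ∀ ω, E ω ↔ F ω) : prEv p E = prEv p F := by
  unfold prEv
  refine Finset.sum_congr rfl fun ω _ => ?_
  by_cases hE : E ω
  · simp [hE, (h ω).mp hE]
  · have hF : ¬ F ω := fun hF => hE ((h ω).mpr hF)
    simp [hE, hF]

lemma prEv_false {E : Ω → Prop} (h : ∀ ω, ¬ E ω) : prEv p E = 0 := by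
  unfold prEv
  refine Finset.sum_eq_zero fun ω _ => ?_
  simp [h ω]

lemma prEv_true (hsum : ∑ ω, p ω = 1) : prEv p (fun _ => True) = 1 := by
  simpa [prEv] using hsum

lemma prEv_le_one (hp : ∀ ω, 0 ≤ p ω) (hsum : ∑ ω, p ω = 1) (E : Ω → Prop) :
    prEv p E ≤ 1 := by
  have := prEv_mono hp (E := E) (F := fun _ => True) (fun ω _ => trivial)
  rwa [prEv_true hsum] at this

lemma prEv_split {T : Type*} [Fintype T] (X : Ω → T) (E : Ω → Prop) :
    prEv p E = ∑ t : T, prEv p (fun ω => E ω ∧ X ω = t) := by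
  unfold prEv
  rw [Finset.sum_comm]
  refine Finset.sum_congr rfl fun ω _ => ?_
  by_cases h : E ω <;> simp [h]

lemma sum_prEv_eq_one (hsum : ∑ ω, p ω = 1) {T : Type*} [Fintype T] (X : Ω → T) :
    ∑ t : T, prEv p (fun ω => X ω = t) = 1 := by
  have h := prEv_split X (fun _ => True) (p := p)
  rw [prEv_true hsum] at h
  rw [h]
  exact Finset.sum_congr rfl fun t _ => prEv_congr (fun ω => by simp)

end PrEv
lemma gibbs {ι : Type*} (s : Finset ι) (a b : ι → ℝ) (c B : ℝ)
    (ha : ∀ i ∈ s, 0 ≤ a i) (hb : ∀ i ∈ s, 0 ≤ b i)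
    (hab : ∀ i ∈ s, 0 < a i → 0 < b i)
    (hsa : ∑ i ∈ s, a i = c) (hc : 0 < c)
    (hsb : ∑ i ∈ s, b i ≤ B) (hB : 0 < B) :
    ∑ i ∈ s, a i * Real.logb 2 (b i / a i) ≤ c * Real.logb 2 (B / c) := by
  have hL : (0:ℝ) < Real.log 2 := Real.log_pos (by norm_num)
  have key : ∑ i ∈ s, a i * Real.log (b i / a i) ≤ c * Real.log (B / c) := by
    have hterm : ∀ i ∈ s, a i * Real.log (b i / a i) ≤
        (c / B) * b i - a i + a i * Real.log (B / c) := by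
      intro i hi
      rcases eq_or_lt_of_le (ha i hi) with h0 | h0
      · rw [← h0]
        simp only [zero_mul, mul_zero, sub_zero, zero_add, add_zero]
        have h2 := hb i hi
        positivity
      · have hbi := hab i hi h0
        have h1 : Real.log (b i * c / (a i * B)) ≤ b i * c / (a i * B) - 1 :=
          Real.log_le_sub_one_of_pos (by positivity)
        have h2 : Real.log (b i / a i) = Real.log (b i * c / (a i * B)) + Real.log (B / c) := by
          rw [← Real.log_mul (by positivity) (by positivity)]
          congr 1
          field_simp
        have := mul_le_mul_of_nonneg_left h1 (le_of_lt h0)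
        calc a i * Real.log (b i / a i)
            = a i * Real.log (b i * c / (a i * B)) + a i * Real.log (B / c) := by
              rw [h2]; ring
          _ ≤ a i * (b i * c / (a i * B) - 1) + a i * Real.log (B / c) := by linarith
          _ = (c / B) * b i - a i + a i * Real.log (B / c) := by
              field_simp
    calc ∑ i ∈ s, a i * Real.log (b i / a i)
        ≤ ∑ i ∈ s, ((c / B) * b i - a i + a i * Real.log (B / c)) :=
          Finset.sum_le_sum hterm
      _ = (c / B) * (∑ i ∈ s, b i) - c + c * Real.log (B / c) := by
          rw [Finset.sum_add_distrib, Finset.sum_sub_distrib, ← Finset.mul_sum, hsa,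
            ← Finset.sum_mul, hsa]
      _ ≤ (c / B) * B - c + c * Real.log (B / c) := by
          have : (0:ℝ) ≤ c / B := by positivity
          nlinarith
      _ = c * Real.log (B / c) := by field_simp; ring
  have e1 : ∀ x : ℝ, Real.logb 2 x = Real.log x / Real.log 2 := fun x => rfl
  calc ∑ i ∈ s, a i * Real.logb 2 (b i / a i)
      = (∑ i ∈ s, a i * Real.log (b i / a i)) / Real.log 2 := by
        rw [Finset.sum_div]
        exact Finset.sum_congr rfl fun i _ => by rw [e1, mul_div_assoc]
    _ ≤ (c * Real.log (B / c)) / Real.log 2 := by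
        exact div_le_div_of_nonneg_right key (le_of_lt hL)
    _ = c * Real.logb 2 (B / c) := by rw [e1, mul_div_assoc]

section MI
variable {Ω S T : Type*} [Fintype Ω] [Fintype S] [Fintype T]
variable {p : Ω → ℝ}

lemma mi_eq_sum (hp : ∀ ω, 0 ≤ p ω) (X : Ω → S) (Y : Ω → T) :
    ent p X - condEnt p X Y =
      ∑ s : S, ∑ t : T, prEv p (fun ω => X ω = s ∧ Y ω = t) *
        Real.logb 2 (prEv p (fun ω => X ω = s ∧ Y ω = t) /
          (prEv p (fun ω => X ω = s) * prEv p (fun ω => Y ω = t))) := by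
  have hPX : ∀ s, prEv p (fun ω => X ω = s) =
      ∑ t : T, prEv p (fun ω => X ω = s ∧ Y ω = t) := fun s => prEv_split Y _
  unfold ent condEnt
  rw [neg_sub_neg]
  have eA : ∀ s : S, prEv p (fun ω => X ω = s) * Real.logb 2 (prEv p (fun ω => X ω = s)) =
      ∑ t : T, prEv p (fun ω => X ω = s ∧ Y ω = t) *
        Real.logb 2 (prEv p (fun ω => X ω = s)) := by
    intro s
    nth_rewrite 1 [hPX s]
    rw [Finset.sum_mul]
  rw [Finset.sum_congr rfl (fun s _ => eA s), ← Finset.sum_sub_distrib]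
  refine Finset.sum_congr rfl fun s _ => ?_
  rw [← Finset.sum_sub_distrib]
  refine Finset.sum_congr rfl fun t _ => ?_
  set J := prEv p (fun ω => X ω = s ∧ Y ω = t) with hJdef
  by_cases hJ : J = 0
  · simp [hJ]
  · have hJpos : 0 < J := lt_of_le_of_ne (prEv_nonneg hp _) (Ne.symm hJ)
    have hX : 0 < prEv p (fun ω => X ω = s) :=
      lt_of_lt_of_le hJpos (prEv_mono hp (fun ω h => h.1))
    have hY : 0 < prEv p (fun ω => Y ω = t) :=
      lt_of_lt_of_le hJpos (prEv_mono hp (fun ω h => h.2))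
    rw [Real.logb_div hJ hY.ne', Real.logb_div hJ (by positivity),
      Real.logb_mul hX.ne' hY.ne']
    ring

lemma mi_symm (hp : ∀ ω, 0 ≤ p ω) (X : Ω → S) (Y : Ω → T) :
    mi p X Y = ent p Y - condEnt p Y X := by
  unfold mi
  rw [mi_eq_sum hp X Y, mi_eq_sum hp Y X, Finset.sum_comm]
  refine Finset.sum_congr rfl fun t _ => Finset.sum_congr rfl fun s _ => ?_
  have h : prEv p (fun ω => X ω = s ∧ Y ω = t) = prEv p (fun ω => Y ω = t ∧ X ω = s) :=
    prEv_congr fun ω => and_comm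
  rw [h, mul_comm (prEv p (fun ω => X ω = s))]

/-- Conditioning on extra information reduces conditional entropy. -/
lemma condEnt_pair_le (hp : ∀ ω, 0 ≤ p ω) (hsum : ∑ ω, p ω = 1)
    {U : Type*} [Fintype U] (X : Ω → S) (Uu : Ω → U) (V : Ω → T) :
    condEnt p X (fun ω => (Uu ω, V ω)) ≤ condEnt p X V := by
  have hJ2 : ∀ (s : S) (v : T), prEv p (fun ω => X ω = s ∧ V ω = v)
      = ∑ u : U, prEv p (fun ω => X ω = s ∧ (Uu ω, V ω) = (u, v)) := by
    intro s v
    rw [prEv_split Uu (fun ω => X ω = s ∧ V ω = v)]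
    refine Finset.sum_congr rfl fun u _ => prEv_congr fun ω => ?_
    constructor
    · rintro ⟨⟨h1, h2⟩, h3⟩; exact ⟨h1, by rw [h2, h3]⟩
    · rintro ⟨h1, h2⟩; rw [Prod.mk.injEq] at h2; exact ⟨⟨h1, h2.2⟩, h2.1⟩
  have hPVsplit : ∀ v : T, prEv p (fun ω => V ω = v)
      = ∑ s : S, prEv p (fun ω => X ω = s ∧ V ω = v) := by
    intro v
    rw [prEv_split X (fun ω => V ω = v)]
    exact Finset.sum_congr rfl fun s _ => prEv_congr fun ω => and_comm
  have hPVsplit2 : ∀ v : T, prEv p (fun ω => V ω = v)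
      = ∑ u : U, prEv p (fun ω => (Uu ω, V ω) = (u, v)) := by
    intro v
    rw [prEv_split Uu (fun ω => V ω = v)]
    refine Finset.sum_congr rfl fun u _ => prEv_congr fun ω => ?_
    constructor
    · rintro ⟨h1, h2⟩; rw [h1, h2]
    · rintro h; rw [Prod.mk.injEq] at h; exact ⟨h.2, h.1⟩
  unfold condEnt
  rw [neg_le_neg_iff, ← sub_nonpos]
  have key : (∑ s : S, ∑ v : T, prEv p (fun ω => X ω = s ∧ V ω = v) *
        Real.logb 2 (prEv p (fun ω => X ω = s ∧ V ω = v) / prEv p (fun ω => V ω = v)))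
      - (∑ s : S, ∑ t : U × T, prEv p (fun ω => X ω = s ∧ (Uu ω, V ω) = t) *
        Real.logb 2 (prEv p (fun ω => X ω = s ∧ (Uu ω, V ω) = t) /
          prEv p (fun ω => (Uu ω, V ω) = t)))
      = ∑ s : S, ∑ t : U × T, prEv p (fun ω => X ω = s ∧ (Uu ω, V ω) = t) *
        Real.logb 2 ((prEv p (fun ω => X ω = s ∧ V ω = t.2) *
            (prEv p (fun ω => (Uu ω, V ω) = t) / prEv p (fun ω => V ω = t.2))) /
          prEv p (fun ω => X ω = s ∧ (Uu ω, V ω) = t)) := by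
    rw [← Finset.sum_sub_distrib]
    refine Finset.sum_congr rfl fun s _ => ?_
    have e1 : (∑ v : T, prEv p (fun ω => X ω = s ∧ V ω = v) *
          Real.logb 2 (prEv p (fun ω => X ω = s ∧ V ω = v) / prEv p (fun ω => V ω = v)))
        = ∑ t : U × T, prEv p (fun ω => X ω = s ∧ (Uu ω, V ω) = t) *
          Real.logb 2 (prEv p (fun ω => X ω = s ∧ V ω = t.2) /
            prEv p (fun ω => V ω = t.2)) := by
      rw [Fintype.sum_prod_type_right]
      refine Finset.sum_congr rfl fun v _ => ?_
      nth_rewrite 1 [hJ2 s v]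
      rw [Finset.sum_mul]
    rw [e1, ← Finset.sum_sub_distrib]
    refine Finset.sum_congr rfl fun t _ => ?_
    by_cases hJ : prEv p (fun ω => X ω = s ∧ (Uu ω, V ω) = t) = 0
    · simp [hJ]
    · have hJpos : 0 < prEv p (fun ω => X ω = s ∧ (Uu ω, V ω) = t) :=
        lt_of_le_of_ne (prEv_nonneg hp _) (Ne.symm hJ)
      have hJ2pos : 0 < prEv p (fun ω => X ω = s ∧ V ω = t.2) :=
        lt_of_lt_of_le hJpos (prEv_mono hp fun ω h => ⟨h.1, by rw [← h.2]⟩)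
      have hP2 : 0 < prEv p (fun ω => (Uu ω, V ω) = t) :=
        lt_of_lt_of_le hJpos (prEv_mono hp fun ω h => h.2)
      have hPV : 0 < prEv p (fun ω => V ω = t.2) :=
        lt_of_lt_of_le hJ2pos (prEv_mono hp fun ω h => h.2)
      rw [Real.logb_div hJ2pos.ne' hPV.ne', Real.logb_div hJ hP2.ne',
        Real.logb_div (by positivity) hJ,
        Real.logb_mul hJ2pos.ne' (by positivity),
        Real.logb_div hP2.ne' hPV.ne']
      ring
  rw [key]
  have hgibbs := gibbs (Finset.univ : Finset (S × (U × T)))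
    (fun x => prEv p (fun ω => X ω = x.1 ∧ (Uu ω, V ω) = x.2))
    (fun x => prEv p (fun ω => X ω = x.1 ∧ V ω = x.2.2) *
      (prEv p (fun ω => (Uu ω, V ω) = x.2) / prEv p (fun ω => V ω = x.2.2)))
    1 1
    (fun x _ => prEv_nonneg hp _)
    (fun x _ => by
      have h1 := prEv_nonneg hp (p := p) (fun ω => X ω = x.1 ∧ V ω = x.2.2)
      have h2 := prEv_nonneg hp (p := p) (fun ω => (Uu ω, V ω) = x.2)
      have h3 := prEv_nonneg hp (p := p) (fun ω => V ω = x.2.2)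
      positivity)
    (fun x _ hx => by
      have hJ2pos : 0 < prEv p (fun ω => X ω = x.1 ∧ V ω = x.2.2) :=
        lt_of_lt_of_le hx (prEv_mono hp fun ω h => ⟨h.1, by rw [← h.2]⟩)
      have hP2 : 0 < prEv p (fun ω => (Uu ω, V ω) = x.2) :=
        lt_of_lt_of_le hx (prEv_mono hp fun ω h => h.2)
      have hPV : 0 < prEv p (fun ω => V ω = x.2.2) :=
        lt_of_lt_of_le hJ2pos (prEv_mono hp fun ω h => h.2)
      positivity)
    (by
      rw [Fintype.sum_prod_type]
      have : ∀ s : S, (∑ t : U × T, prEv p (fun ω => X ω = s ∧ (Uu ω, V ω) = t))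
          = prEv p (fun ω => X ω = s) := fun s =>
        (prEv_split (fun ω => (Uu ω, V ω)) (fun ω => X ω = s)).symm
      rw [Finset.sum_congr rfl fun s _ => this s]
      exact sum_prEv_eq_one hsum X)
    one_pos
    (by
      rw [Fintype.sum_prod_type_right]
      have e2 : ∀ t : U × T, (∑ s : S, prEv p (fun ω => X ω = s ∧ V ω = t.2) *
            (prEv p (fun ω => (Uu ω, V ω) = t) / prEv p (fun ω => V ω = t.2)))
          = prEv p (fun ω => V ω = t.2) *
            (prEv p (fun ω => (Uu ω, V ω) = t) / prEv p (fun ω => V ω = t.2)) := by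
        intro t
        rw [← Finset.sum_mul, ← hPVsplit]
      rw [Finset.sum_congr rfl fun t _ => e2 t, Fintype.sum_prod_type_right]
      have e3 : ∀ v : T, (∑ u : U, prEv p (fun ω => V ω = v) *
            (prEv p (fun ω => (Uu ω, V ω) = (u, v)) / prEv p (fun ω => V ω = v)))
          ≤ prEv p (fun ω => V ω = v) := by
        intro v
        rw [← Finset.mul_sum, ← Finset.sum_div, ← hPVsplit2]
        rcases eq_or_lt_of_le (prEv_nonneg hp (p := p) (fun ω => V ω = v)) with h0 | h0
        · rw [← h0]; simp
        · rw [div_self h0.ne', mul_one]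
      calc _ ≤ ∑ v : T, prEv p (fun ω => V ω = v) :=
            Finset.sum_le_sum fun v _ => e3 v
        _ = 1 := sum_prEv_eq_one hsum V)
    one_pos
  rw [Fintype.sum_prod_type] at hgibbs
  simpa using hgibbs

/-- If `A` is a function of `Tv`, conditioning on `(Tv, A)` is the same as on `Tv`. -/
lemma condEnt_comp_eq {U 𝒳 : Type*} [Fintype U] [Fintype 𝒳]
    (X : Ω → S) (Tv : Ω → U) (A : Ω → 𝒳) (f : U → 𝒳) (hf : ∀ ω, A ω = f (Tv ω)) :
    condEnt p X (fun ω => (Tv ω, A ω)) = condEnt p X Tv := by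
  unfold condEnt
  congr 1
  refine Finset.sum_congr rfl fun s _ => ?_
  rw [Fintype.sum_prod_type]
  refine Finset.sum_congr rfl fun u _ => ?_
  rw [Finset.sum_eq_single (f u)]
  · have h1 : prEv p (fun ω => X ω = s ∧ (Tv ω, A ω) = (u, f u)) =
        prEv p (fun ω => X ω = s ∧ Tv ω = u) := by
      refine prEv_congr fun ω => ?_
      constructor
      · rintro ⟨h, h2⟩
        exact ⟨h, (Prod.mk.injEq _ _ _ _ ▸ h2).1⟩
      · rintro ⟨h, h2⟩
        exact ⟨h, by rw [Prod.mk.injEq]; exact ⟨h2, by rw [hf ω, h2]⟩⟩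
    have h2 : prEv p (fun ω => (Tv ω, A ω) = (u, f u)) =
        prEv p (fun ω => Tv ω = u) := by
      refine prEv_congr fun ω => ?_
      constructor
      · rintro h2
        exact (Prod.mk.injEq _ _ _ _ ▸ h2).1
      · rintro h2
        rw [Prod.mk.injEq]; exact ⟨h2, by rw [hf ω, h2]⟩
    rw [h1, h2]
  · intro a _ ha
    have h0 : prEv p (fun ω => X ω = s ∧ (Tv ω, A ω) = (u, a)) = 0 := by
      refine prEv_false fun ω => ?_
      rintro ⟨_, h2⟩
      rw [Prod.mk.injEq] at h2
      exact ha (by rw [← h2.2, hf ω, h2.1])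
    rw [h0, zero_mul]
  · intro h
    exact absurd (Finset.mem_univ _) h

lemma ent_uniform {𝒳 : Type*} [Fintype 𝒳] [Nonempty 𝒳] (Z : Ω → 𝒳)
    (hunif : ∀ x : 𝒳, prEv p (fun ω => Z ω = x) = 1 / Fintype.card 𝒳) :
    ent p Z = Real.logb 2 (Fintype.card 𝒳) := by
  have hc : (0:ℝ) < Fintype.card 𝒳 := by
    have := Fintype.card_pos (α := 𝒳)
    exact_mod_cast this
  unfold ent
  simp only [hunif]
  rw [Finset.sum_const, Finset.card_univ, nsmul_eq_mul]
  rw [one_div, Real.logb_inv]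
  field_simp

lemma fano {𝒳 : Type*} [Fintype 𝒳] [Nonempty 𝒳]
    (hp : ∀ ω, 0 ≤ p ω) (hsum : ∑ ω, p ω = 1) (Z A : Ω → 𝒳)
    (hacc : prEv p (fun ω => A ω = Z ω) ≥ 3 / 4) :
    condEnt p Z A ≤ 1 + (1 / 4) * Real.logb 2 (Fintype.card 𝒳) := by
  classical
  set J : 𝒳 × 𝒳 → ℝ := fun x => prEv p (fun ω => Z ω = x.1 ∧ A ω = x.2) with hJdef
  set PA : 𝒳 → ℝ := fun a => prEv p (fun ω => A ω = a) with hPAdef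
  set F : 𝒳 × 𝒳 → ℝ := fun x => J x * Real.logb 2 (PA x.2 / J x) with hFdef
  have hcard1 : (1:ℝ) ≤ Fintype.card 𝒳 := by exact_mod_cast Fintype.card_pos
  have hcard0 : (0:ℝ) < Fintype.card 𝒳 := lt_of_lt_of_le one_pos hcard1
  have hlogcard : 0 ≤ Real.logb 2 (Fintype.card 𝒳) := Real.logb_nonneg (by norm_num) hcard1
  -- condEnt = sum of F over all pairs, in flipped-log form
  have hCE : condEnt p Z A = ∑ x : 𝒳 × 𝒳, F x := by
    unfold condEnt
    rw [Fintype.sum_prod_type]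
    rw [← Finset.sum_neg_distrib]
    refine Finset.sum_congr rfl fun z _ => ?_
    rw [← Finset.sum_neg_distrib]
    refine Finset.sum_congr rfl fun t _ => ?_
    simp only [hFdef, hJdef, hPAdef]
    rw [← inv_div, Real.logb_inv]
    ring
  have hsplitsum : ∑ x : 𝒳 × 𝒳, F x = (∑ z : 𝒳, F (z, z)) +
      ∑ x ∈ Finset.univ.filter (fun x : 𝒳 × 𝒳 => ¬ x.1 = x.2), F x := by
    rw [← Finset.sum_filter_add_sum_filter_not Finset.univ (fun x : 𝒳 × 𝒳 => x.1 = x.2) F]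
    congr 1
    rw [Finset.sum_filter, Fintype.sum_prod_type]
    refine Finset.sum_congr rfl fun z _ => ?_
    simp
  have hccQ : prEv p (fun ω => A ω = Z ω) = ∑ z : 𝒳, J (z, z) := by
    rw [prEv_split Z (fun ω => A ω = Z ω)]
    refine Finset.sum_congr rfl fun z _ => ?_
    simp only [hJdef]
    refine prEv_congr fun ω => ?_
    constructor
    · rintro ⟨h1, h2⟩; exact ⟨h2, h1.trans h2⟩
    · rintro ⟨h1, h2⟩; exact ⟨h2.trans h1.symm, h1⟩
  set cc := prEv p (fun ω => A ω = Z ω) with hccdef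
  have hccpos : 0 < cc := lt_of_lt_of_le (by norm_num) hacc
  have hD : ∑ z : 𝒳, F (z, z) ≤ cc * Real.logb 2 (1 / cc) := by
    have := gibbs Finset.univ (fun z : 𝒳 => J (z, z)) (fun z => PA z) cc 1
      (fun z _ => prEv_nonneg hp _) (fun z _ => prEv_nonneg hp _)
      (fun z _ h => lt_of_lt_of_le h (prEv_mono hp fun ω hh => hh.2))
      hccQ.symm hccpos (le_of_eq (sum_prEv_eq_one hsum A)) one_pos
    exact this
  set od := Finset.univ.filter (fun x : 𝒳 × 𝒳 => ¬ x.1 = x.2) with hoddef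
  set pe := ∑ x ∈ od, J x with hpedef
  have hpe0 : 0 ≤ pe := Finset.sum_nonneg fun x _ => prEv_nonneg hp _
  have hsumJ : ∑ x : 𝒳 × 𝒳, J x = 1 := by
    rw [Fintype.sum_prod_type]
    have : ∀ z : 𝒳, (∑ a : 𝒳, J (z, a)) = prEv p (fun ω => Z ω = z) := fun z =>
      (prEv_split A (fun ω => Z ω = z)).symm
    rw [Finset.sum_congr rfl fun z _ => this z]
    exact sum_prEv_eq_one hsum Z
  have hccpe : cc + pe = 1 := by
    rw [hccQ, hpedef]
    have hdiagf : ∑ z : 𝒳, J (z, z) =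
        ∑ x ∈ Finset.univ.filter (fun x : 𝒳 × 𝒳 => x.1 = x.2), J x := by
      rw [Finset.sum_filter, Fintype.sum_prod_type]
      refine Finset.sum_congr rfl fun z _ => ?_
      simp
    rw [hdiagf, hoddef, Finset.sum_filter_add_sum_filter_not, hsumJ]
  rw [hCE, hsplitsum]
  rcases eq_or_lt_of_le hpe0 with hpe | hpe
  · -- pe = 0
    have hz : ∀ x ∈ od, J x = 0 := by
      intro x hx
      have := (Finset.sum_eq_zero_iff_of_nonneg (fun x _ => prEv_nonneg hp
        (p := p) (fun ω => Z ω = x.1 ∧ A ω = x.2))).mp hpe.symm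
      exact this x hx
    have hO : ∑ x ∈ od, F x = 0 := Finset.sum_eq_zero fun x hx => by
      simp only [hFdef]; rw [hz x hx, zero_mul]
    have hcc1 : cc = 1 := by linarith
    rw [hO, add_zero]
    have : cc * Real.logb 2 (1 / cc) = 0 := by rw [hcc1]; norm_num
    nlinarith [hD]
  · -- pe > 0
    have hObd : ∑ x ∈ od, PA x.2 ≤ (Fintype.card 𝒳 : ℝ) := by
      calc ∑ x ∈ od, PA x.2 ≤ ∑ x : 𝒳 × 𝒳, PA x.2 :=
            Finset.sum_le_sum_of_subset_of_nonneg (Finset.filter_subset _ _)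
              (fun x _ _ => prEv_nonneg hp _)
        _ = (Fintype.card 𝒳 : ℝ) := by
            rw [Fintype.sum_prod_type]
            have : ∀ z : 𝒳, (∑ a : 𝒳, PA a) = 1 := fun z => sum_prEv_eq_one hsum A
            rw [Finset.sum_congr rfl fun z _ => this z]
            simp
    have hO : ∑ x ∈ od, F x ≤ pe * Real.logb 2 ((Fintype.card 𝒳 : ℝ) / pe) := by
      have := gibbs od (fun x => J x) (fun x => PA x.2) pe (Fintype.card 𝒳)
        (fun x _ => prEv_nonneg hp _) (fun x _ => prEv_nonneg hp _)
        (fun x _ h => lt_of_lt_of_le h (prEv_mono hp fun ω hh => hh.2))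
        hpedef.symm hpe hObd hcard0
      exact this
    have hbin : cc * Real.logb 2 (1 / cc) + pe * Real.logb 2 (1 / pe) ≤ 1 := by
      have := gibbs (Finset.univ : Finset Bool) (fun b => if b then cc else pe)
        (fun _ => (1:ℝ)) 1 2
        (fun b _ => by by_cases hb : b <;> simp [hb, le_of_lt hccpos, hpe0])
        (fun b _ => by norm_num)
        (fun b _ _ => one_pos)
        (by rw [Fintype.sum_bool]; simpa using hccpe)
        one_pos
        (by rw [Fintype.sum_bool]; norm_num)
        (by norm_num)
      rw [Fintype.sum_bool] at this
      have h2 : Real.logb 2 (2 / 1) = 1 := by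
        norm_num [Real.logb_self_eq_one]
      rw [h2, mul_one] at this
      simp only [Bool.false_eq_true, if_true, if_false] at this
      linarith [this]
    have hsplitlog : Real.logb 2 ((Fintype.card 𝒳 : ℝ) / pe) =
        Real.logb 2 (Fintype.card 𝒳) + Real.logb 2 (1 / pe) := by
      rw [Real.logb_div hcard0.ne' hpe.ne', one_div, Real.logb_inv]
      ring
    have hpe14 : pe ≤ 1 / 4 := by linarith
    have hpecard : pe * Real.logb 2 (Fintype.card 𝒳) ≤
        (1 / 4) * Real.logb 2 (Fintype.card 𝒳) :=
      mul_le_mul_of_nonneg_right hpe14 hlogcard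
    have hcclog : cc * Real.logb 2 (1 / cc) + pe * Real.logb 2 ((Fintype.card 𝒳 : ℝ) / pe)
        ≤ 1 + (1 / 4) * Real.logb 2 (Fintype.card 𝒳) := by
      rw [hsplitlog]
      nlinarith [hbin, hpecard]
    linarith [hD, hO]

end MI
/-- If `Z` is uniform over `𝒳`, `W` is independent of `Z`,
`Y₁,…,Yₙ` are mutually conditionally independent given `(Z,W)`,
and `A = g(Y₁,…,Yₙ,W)` satisfies `Pr[A = Z] ≥ 3/4`, then there is an index `i`
with `I((Yᵢ,W);Z) ≥ (1/n)·((3/4)·log₂|𝒳| − 1)`. -/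
theorem exists_party_with_high_mutualInfo
    {Ω 𝒳 S V : Type*} [Fintype Ω] [Fintype 𝒳] [Nonempty 𝒳] [Fintype S] [Fintype V]
    (n : ℕ) (hn : 1 ≤ n)
    (p : Ω → ℝ) (hp : ∀ ω, 0 ≤ p ω) (hsum : ∑ ω, p ω = 1)
    (Z : Ω → 𝒳) (W : Ω → V) (Y : Fin n → Ω → S) (A : Ω → 𝒳)
    (hunif : ∀ x : 𝒳, prEv p (fun ω => Z ω = x) = 1 / Fintype.card 𝒳)
    (hindep : ∀ (x : 𝒳) (w : V),
      prEv p (fun ω => Z ω = x ∧ W ω = w) =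
        prEv p (fun ω => Z ω = x) * prEv p (fun ω => W ω = w))
    (hci : ∀ (y : Fin n → S) (x : 𝒳) (w : V),
      0 < prEv p (fun ω => Z ω = x ∧ W ω = w) →
      prEv p (fun ω => (∀ i, Y i ω = y i) ∧ (Z ω = x ∧ W ω = w)) /
          prEv p (fun ω => Z ω = x ∧ W ω = w) =
        ∏ i, (prEv p (fun ω => Y i ω = y i ∧ (Z ω = x ∧ W ω = w)) /
          prEv p (fun ω => Z ω = x ∧ W ω = w)))
    (g : (Fin n → S) → V → 𝒳) (hg : ∀ ω, A ω = g (fun i => Y i ω) (W ω))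
    (hacc : prEv p (fun ω => A ω = Z ω) ≥ 3 / 4) :
    ∃ i : Fin n, mi p (fun ω => (Y i ω, W ω)) Z ≥
      (1 / (n : ℝ)) * ((3 / 4) * Real.logb 2 (Fintype.card 𝒳) - 1) := by
  classical
  obtain ⟨m, hm⟩ : ∃ m, n = m + 1 := ⟨n - 1, (Nat.succ_pred_eq_of_pos hn).symm⟩
  set Tv : Ω → (Fin n → S) × V := fun ω => ((fun i => Y i ω), W ω) with hTvdef
  -- marginalization of the full tuple onto party i
  have hmarg : ∀ (i : Fin n) (z : 𝒳) (s : S) (w : V),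
      prEv p (fun ω => Z ω = z ∧ (Y i ω, W ω) = (s, w)) =
      ∑ y : Fin n → S, (if y i = s then
        prEv p (fun ω => Z ω = z ∧ Tv ω = (y, w)) else 0) := by
    intro i z s w
    rw [prEv_split (fun ω => (fun j => Y j ω))
      (fun ω => Z ω = z ∧ (Y i ω, W ω) = (s, w))]
    refine Finset.sum_congr rfl fun y _ => ?_
    by_cases h : y i = s
    · rw [if_pos h]
      refine prEv_congr fun ω => ?_
      constructor
      · rintro ⟨⟨hz, hyw⟩, hy⟩
        rw [Prod.mk.injEq] at hyw
        exact ⟨hz, by rw [hTvdef, Prod.mk.injEq]; exact ⟨hy, hyw.2⟩⟩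
      · rintro ⟨hz, hpair⟩
        rw [hTvdef, Prod.mk.injEq] at hpair
        refine ⟨⟨hz, ?_⟩, hpair.1⟩
        rw [Prod.mk.injEq]
        exact ⟨(congrFun hpair.1 i).trans h, hpair.2⟩
    · rw [if_neg h]
      refine prEv_false fun ω => ?_
      rintro ⟨⟨hz, hyw⟩, hy⟩
      rw [Prod.mk.injEq] at hyw
      exact h (by rw [← congrFun hy i]; exact hyw.1)
  -- rewrite MI_i over the full tuple
  have hMIi : ∀ i : Fin n,
      (∑ z : 𝒳, ∑ q : S × V, prEv p (fun ω => Z ω = z ∧ (Y i ω, W ω) = q) *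
        Real.logb 2 (prEv p (fun ω => Z ω = z ∧ (Y i ω, W ω) = q) /
          (prEv p (fun ω => Z ω = z) * prEv p (fun ω => (Y i ω, W ω) = q))))
      = ∑ z : 𝒳, ∑ t : (Fin n → S) × V, prEv p (fun ω => Z ω = z ∧ Tv ω = t) *
        Real.logb 2 (prEv p (fun ω => Z ω = z ∧ (Y i ω, W ω) = (t.1 i, t.2)) /
          (prEv p (fun ω => Z ω = z) *
            prEv p (fun ω => (Y i ω, W ω) = (t.1 i, t.2)))) := by
    intro i
    refine Finset.sum_congr rfl fun z _ => ?_
    rw [Fintype.sum_prod_type, Fintype.sum_prod_type_right, Finset.sum_comm]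
    refine Finset.sum_congr rfl fun w _ => ?_
    have e1 : ∀ s : S, prEv p (fun ω => Z ω = z ∧ (Y i ω, W ω) = (s, w)) *
        Real.logb 2 (prEv p (fun ω => Z ω = z ∧ (Y i ω, W ω) = (s, w)) /
          (prEv p (fun ω => Z ω = z) * prEv p (fun ω => (Y i ω, W ω) = (s, w))))
        = ∑ y : Fin n → S, (if y i = s then
            prEv p (fun ω => Z ω = z ∧ Tv ω = (y, w)) *
            Real.logb 2 (prEv p (fun ω => Z ω = z ∧ (Y i ω, W ω) = (s, w)) /
              (prEv p (fun ω => Z ω = z) *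
                prEv p (fun ω => (Y i ω, W ω) = (s, w)))) else 0) := by
      intro s
      rw [hmarg i z s w, Finset.sum_mul]
      exact Finset.sum_congr rfl fun y _ => by rw [ite_mul, zero_mul]
    rw [Finset.sum_congr rfl fun s _ => e1 s, Finset.sum_comm]
    refine Finset.sum_congr rfl fun y _ => ?_
    simp [Finset.sum_ite_eq]
  -- the per-term rewrite of the difference
  have hkey : ∀ (z : 𝒳) (t : (Fin n → S) × V),
      prEv p (fun ω => Z ω = z ∧ Tv ω = t) *
        Real.logb 2 (prEv p (fun ω => Z ω = z ∧ Tv ω = t) /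
          (prEv p (fun ω => Z ω = z) * prEv p (fun ω => Tv ω = t)))
      - prEv p (fun ω => Z ω = z ∧ Tv ω = t) *
        (∑ i : Fin n, Real.logb 2 (prEv p (fun ω => Z ω = z ∧ (Y i ω, W ω) = (t.1 i, t.2)) /
          (prEv p (fun ω => Z ω = z) * prEv p (fun ω => (Y i ω, W ω) = (t.1 i, t.2)))))
      = prEv p (fun ω => Z ω = z ∧ Tv ω = t) *
        Real.logb 2 (((∏ i : Fin n, prEv p (fun ω => (Y i ω, W ω) = (t.1 i, t.2))) /
            (prEv p (fun ω => W ω = t.2)) ^ m) / prEv p (fun ω => Tv ω = t)) := by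
    intro z t
    by_cases hJf : prEv p (fun ω => Z ω = z ∧ Tv ω = t) = 0
    · simp [hJf]
    have hJfpos : 0 < prEv p (fun ω => Z ω = z ∧ Tv ω = t) :=
      lt_of_le_of_ne (prEv_nonneg hp _) (Ne.symm hJf)
    have hPZ : 0 < prEv p (fun ω => Z ω = z) :=
      lt_of_lt_of_le hJfpos (prEv_mono hp fun ω h => h.1)
    have hPT : 0 < prEv p (fun ω => Tv ω = t) :=
      lt_of_lt_of_le hJfpos (prEv_mono hp fun ω h => h.2)
    have hPZW : 0 < prEv p (fun ω => Z ω = z ∧ W ω = t.2) :=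
      lt_of_lt_of_le hJfpos (prEv_mono hp fun ω h =>
        ⟨h.1, by rw [← h.2]⟩)
    have hJi : ∀ i : Fin n, 0 < prEv p (fun ω => Z ω = z ∧ (Y i ω, W ω) = (t.1 i, t.2)) := by
      intro i
      refine lt_of_lt_of_le hJfpos (prEv_mono hp fun ω h => ⟨h.1, ?_⟩)
      have h2 := h.2
      rw [hTvdef] at h2
      rw [Prod.mk.injEq]
      have := congrArg Prod.fst h2
      have hw := congrArg Prod.snd h2
      exact ⟨by rw [← congrFun this i], hw⟩
    have hPi : ∀ i : Fin n, 0 < prEv p (fun ω => (Y i ω, W ω) = (t.1 i, t.2)) :=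
      fun i => lt_of_lt_of_le (hJi i) (prEv_mono hp fun ω h => h.2)
    have hPW : 0 < prEv p (fun ω => W ω = t.2) :=
      lt_of_lt_of_le hPZW (prEv_mono hp fun ω h => h.2)
    -- conditional independence: product of party marginals
    have hprod : (∏ i : Fin n, prEv p (fun ω => Z ω = z ∧ (Y i ω, W ω) = (t.1 i, t.2)))
        = prEv p (fun ω => Z ω = z ∧ Tv ω = t) *
          (prEv p (fun ω => Z ω = z ∧ W ω = t.2)) ^ m := by
      have h0 := hci t.1 z t.2 hPZW
      have e1 : prEv p (fun ω => (∀ i, Y i ω = t.1 i) ∧ (Z ω = z ∧ W ω = t.2))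
          = prEv p (fun ω => Z ω = z ∧ Tv ω = t) := by
        refine prEv_congr fun ω => ?_
        constructor
        · rintro ⟨hy, hz, hw⟩
          refine ⟨hz, ?_⟩
          have h1 : (fun i => Y i ω) = t.1 := funext fun i => hy i
          calc Tv ω = ((fun i => Y i ω), W ω) := rfl
            _ = (t.1, t.2) := by rw [h1, hw]
            _ = t := rfl
        · rintro ⟨hz, ht⟩
          have h1 := congrArg Prod.fst ht
          have h2 := congrArg Prod.snd ht
          exact ⟨fun i => congrFun h1 i, hz, h2⟩
      have e2 : ∀ i : Fin n, prEv p (fun ω => Y i ω = t.1 i ∧ (Z ω = z ∧ W ω = t.2))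
          = prEv p (fun ω => Z ω = z ∧ (Y i ω, W ω) = (t.1 i, t.2)) := by
        intro i
        refine prEv_congr fun ω => ?_
        constructor
        · rintro ⟨hy, hz, hw⟩
          exact ⟨hz, by rw [Prod.mk.injEq]; exact ⟨hy, hw⟩⟩
        · rintro ⟨hz, hq⟩
          rw [Prod.mk.injEq] at hq
          exact ⟨hq.1, hz, hq.2⟩
      rw [e1] at h0
      rw [Finset.prod_congr rfl (fun i (_ : i ∈ Finset.univ) => by
        rw [div_eq_mul_inv, e2 i, ← div_eq_mul_inv]), Finset.prod_div_distrib,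
        Finset.prod_const, Finset.card_univ, Fintype.card_fin] at h0
      rw [div_eq_div_iff hPZW.ne' (pow_pos hPZW n).ne'] at h0
      refine mul_right_cancel₀ hPZW.ne' ?_
      have hps : (prEv p (fun ω => Z ω = z ∧ W ω = t.2)) ^ n
          = (prEv p (fun ω => Z ω = z ∧ W ω = t.2)) ^ m *
            prEv p (fun ω => Z ω = z ∧ W ω = t.2) := by
        rw [show (prEv p (fun ω => Z ω = z ∧ W ω = t.2)) ^ n
            = (prEv p (fun ω => Z ω = z ∧ W ω = t.2)) ^ (m + 1) from
          congrArg (fun k => (prEv p (fun ω => Z ω = z ∧ W ω = t.2)) ^ k) hm]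
        exact pow_succ _ _
      rw [h0.symm, hps]
      ring
    -- expand all logs
    rw [show ∀ a b c : ℝ, a * b - a * c = a * (b - c) from fun a b c => by ring]
    congr 1
    have hPZW_eq : prEv p (fun ω => Z ω = z ∧ W ω = t.2) =
        prEv p (fun ω => Z ω = z) * prEv p (fun ω => W ω = t.2) := hindep z t.2
    have esum : (∑ i : Fin n, Real.logb 2
        (prEv p (fun ω => Z ω = z ∧ (Y i ω, W ω) = (t.1 i, t.2)) /
          (prEv p (fun ω => Z ω = z) * prEv p (fun ω => (Y i ω, W ω) = (t.1 i, t.2)))))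
        = (∑ i : Fin n, Real.logb 2 (prEv p (fun ω => Z ω = z ∧ (Y i ω, W ω) = (t.1 i, t.2))))
          - (n : ℝ) * Real.logb 2 (prEv p (fun ω => Z ω = z))
          - ∑ i : Fin n, Real.logb 2 (prEv p (fun ω => (Y i ω, W ω) = (t.1 i, t.2))) := by
      rw [Finset.sum_congr rfl (fun i (_ : i ∈ Finset.univ) => by
        rw [Real.logb_div (hJi i).ne' (mul_pos hPZ (hPi i)).ne',
          Real.logb_mul hPZ.ne' (hPi i).ne'])]
      rw [Finset.sum_sub_distrib, Finset.sum_add_distrib, Finset.sum_const,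
        Finset.card_univ, Fintype.card_fin, nsmul_eq_mul]
      ring
    have eJsum : (∑ i : Fin n, Real.logb 2
        (prEv p (fun ω => Z ω = z ∧ (Y i ω, W ω) = (t.1 i, t.2))))
        = Real.logb 2 (prEv p (fun ω => Z ω = z ∧ Tv ω = t)) +
          (m : ℝ) * (Real.logb 2 (prEv p (fun ω => Z ω = z)) +
            Real.logb 2 (prEv p (fun ω => W ω = t.2))) := by
      rw [← Real.logb_prod Finset.univ _ (fun i _ => (hJi i).ne'), hprod, hPZW_eq,
        Real.logb_mul hJf (by positivity), Real.logb_pow,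
        Real.logb_mul hPZ.ne' hPW.ne']
    have ePsum : Real.logb 2 (((∏ i : Fin n, prEv p (fun ω => (Y i ω, W ω) = (t.1 i, t.2))) /
          (prEv p (fun ω => W ω = t.2)) ^ m) / prEv p (fun ω => Tv ω = t))
        = (∑ i : Fin n, Real.logb 2 (prEv p (fun ω => (Y i ω, W ω) = (t.1 i, t.2))))
          - (m : ℝ) * Real.logb 2 (prEv p (fun ω => W ω = t.2))
          - Real.logb 2 (prEv p (fun ω => Tv ω = t)) := by
      have hprodpos : 0 < ∏ i : Fin n, prEv p (fun ω => (Y i ω, W ω) = (t.1 i, t.2)) :=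
        Finset.prod_pos fun i _ => hPi i
      rw [Real.logb_div (by positivity) hPT.ne',
        Real.logb_div hprodpos.ne' (by positivity),
        Real.logb_prod Finset.univ _ (fun i _ => (hPi i).ne'), Real.logb_pow]
    have hnr : (n : ℝ) = (m : ℝ) + 1 := by exact_mod_cast congrArg (Nat.cast : ℕ → ℝ) hm
    rw [Real.logb_div hJf (mul_pos hPZ hPT).ne', Real.logb_mul hPZ.ne' hPT.ne',
      esum, eJsum, ePsum, hnr]
    ring
  -- splitting lemmas
  have hPTsplit : ∀ t : (Fin n → S) × V, prEv p (fun ω => Tv ω = t)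
      = ∑ z : 𝒳, prEv p (fun ω => Z ω = z ∧ Tv ω = t) := by
    intro t
    rw [prEv_split Z (fun ω => Tv ω = t)]
    exact Finset.sum_congr rfl fun z _ => prEv_congr fun ω => and_comm
  have hPWsplit : ∀ (i : Fin n) (w : V), prEv p (fun ω => W ω = w)
      = ∑ s : S, prEv p (fun ω => (Y i ω, W ω) = (s, w)) := by
    intro i w
    rw [prEv_split (Y i) (fun ω => W ω = w)]
    refine Finset.sum_congr rfl fun s _ => prEv_congr fun ω => ?_
    constructor
    · rintro ⟨h1, h2⟩
      rw [Prod.mk.injEq]; exact ⟨h2, h1⟩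
    · rintro h
      rw [Prod.mk.injEq] at h; exact ⟨h.2, h.1⟩
  have hqsum : ∑ t : (Fin n → S) × V,
      (∏ i : Fin n, prEv p (fun ω => (Y i ω, W ω) = (t.1 i, t.2))) /
        (prEv p (fun ω => W ω = t.2)) ^ m ≤ 1 := by
    rw [Fintype.sum_prod_type_right]
    have hper : ∀ w : V, (∑ y : Fin n → S,
        (∏ i : Fin n, prEv p (fun ω => (Y i ω, W ω) = (y i, w))) /
          (prEv p (fun ω => W ω = w)) ^ m) = prEv p (fun ω => W ω = w) := by
      intro w
      rw [← Finset.sum_div]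
      have h1 : (∑ y : Fin n → S, ∏ i : Fin n, prEv p (fun ω => (Y i ω, W ω) = (y i, w)))
          = (prEv p (fun ω => W ω = w)) ^ n := by
        have hps := Finset.prod_univ_sum (t := fun _ : Fin n => (Finset.univ : Finset S))
          (f := fun i s => prEv p (fun ω => (Y i ω, W ω) = (s, w)))
        rw [Fintype.piFinset_univ] at hps
        rw [← hps]
        rw [Finset.prod_congr rfl fun i (_ : i ∈ Finset.univ) => (hPWsplit i w).symm,
          Finset.prod_const, Finset.card_univ, Fintype.card_fin]
      rw [h1]
      rcases eq_or_lt_of_le (prEv_nonneg hp (p := p) (fun ω => W ω = w)) with h0 | h0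
      · rw [← h0, zero_pow (by omega : n ≠ 0), zero_div]
      · rw [show (prEv p (fun ω => W ω = w)) ^ n
            = (prEv p (fun ω => W ω = w)) ^ m * prEv p (fun ω => W ω = w) from by
          rw [show (prEv p (fun ω => W ω = w)) ^ n
              = (prEv p (fun ω => W ω = w)) ^ (m + 1) from
            congrArg (fun k => (prEv p (fun ω => W ω = w)) ^ k) hm]
          exact pow_succ _ _]
        rw [mul_comm, mul_div_assoc, div_self (pow_ne_zero m h0.ne'), mul_one]
    refine le_of_eq ?_
    calc (∑ w : V, ∑ y : Fin n → S,
        (∏ i : Fin n, prEv p (fun ω => (Y i ω, W ω) = ((y, w).1 i, (y, w).2))) /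
          (prEv p (fun ω => W ω = (y, w).2)) ^ m)
        = ∑ w : V, prEv p (fun ω => W ω = w) :=
          Finset.sum_congr rfl fun w _ => hper w
      _ = 1 := sum_prEv_eq_one hsum W
  -- superadditivity
  have hsuper : (ent p Z - condEnt p Z Tv) ≤
      ∑ i : Fin n, (ent p Z - condEnt p Z (fun ω => (Y i ω, W ω))) := by
    rw [mi_eq_sum hp Z Tv,
      Finset.sum_congr rfl fun i (_ : i ∈ Finset.univ) =>
        (mi_eq_sum hp Z (fun ω => (Y i ω, W ω))).trans (hMIi i)]
    rw [← sub_nonpos]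
    have hswap : (∑ i : Fin n, ∑ z : 𝒳, ∑ t : (Fin n → S) × V,
        prEv p (fun ω => Z ω = z ∧ Tv ω = t) *
          Real.logb 2 (prEv p (fun ω => Z ω = z ∧ (Y i ω, W ω) = (t.1 i, t.2)) /
            (prEv p (fun ω => Z ω = z) *
              prEv p (fun ω => (Y i ω, W ω) = (t.1 i, t.2)))))
        = ∑ z : 𝒳, ∑ t : (Fin n → S) × V,
          prEv p (fun ω => Z ω = z ∧ Tv ω = t) *
            ∑ i : Fin n, Real.logb 2 (prEv p (fun ω => Z ω = z ∧ (Y i ω, W ω) = (t.1 i, t.2)) /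
              (prEv p (fun ω => Z ω = z) *
                prEv p (fun ω => (Y i ω, W ω) = (t.1 i, t.2)))) := by
      rw [Finset.sum_comm]
      refine Finset.sum_congr rfl fun z _ => ?_
      rw [Finset.sum_comm]
      exact Finset.sum_congr rfl fun t _ => by rw [← Finset.mul_sum]
    rw [hswap, ← Finset.sum_sub_distrib]
    have e2 : (∑ z : 𝒳, ((∑ t : (Fin n → S) × V,
        prEv p (fun ω => Z ω = z ∧ Tv ω = t) *
          Real.logb 2 (prEv p (fun ω => Z ω = z ∧ Tv ω = t) /
            (prEv p (fun ω => Z ω = z) * prEv p (fun ω => Tv ω = t))))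
        - ∑ t : (Fin n → S) × V,
          prEv p (fun ω => Z ω = z ∧ Tv ω = t) *
            ∑ i : Fin n, Real.logb 2 (prEv p (fun ω => Z ω = z ∧ (Y i ω, W ω) = (t.1 i, t.2)) /
              (prEv p (fun ω => Z ω = z) *
                prEv p (fun ω => (Y i ω, W ω) = (t.1 i, t.2))))))
        = ∑ t : (Fin n → S) × V, prEv p (fun ω => Tv ω = t) *
            Real.logb 2 (((∏ i : Fin n, prEv p (fun ω => (Y i ω, W ω) = (t.1 i, t.2))) /
              (prEv p (fun ω => W ω = t.2)) ^ m) / prEv p (fun ω => Tv ω = t)) := by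
      calc _ = ∑ z : 𝒳, ∑ t : (Fin n → S) × V,
            prEv p (fun ω => Z ω = z ∧ Tv ω = t) *
              Real.logb 2 (((∏ i : Fin n, prEv p (fun ω => (Y i ω, W ω) = (t.1 i, t.2))) /
                (prEv p (fun ω => W ω = t.2)) ^ m) / prEv p (fun ω => Tv ω = t)) := by
            refine Finset.sum_congr rfl fun z _ => ?_
            rw [← Finset.sum_sub_distrib]
            exact Finset.sum_congr rfl fun t _ => hkey z t
        _ = _ := by
            rw [Finset.sum_comm]
            refine Finset.sum_congr rfl fun t _ => ?_
            rw [← Finset.sum_mul, ← hPTsplit t]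
    rw [e2]
    have hg2 := gibbs (Finset.univ : Finset ((Fin n → S) × V))
      (fun t => prEv p (fun ω => Tv ω = t))
      (fun t => (∏ i : Fin n, prEv p (fun ω => (Y i ω, W ω) = (t.1 i, t.2))) /
        (prEv p (fun ω => W ω = t.2)) ^ m)
      1 1
      (fun t _ => prEv_nonneg hp _)
      (fun t _ => div_nonneg (Finset.prod_nonneg fun i _ => prEv_nonneg hp _)
        (pow_nonneg (prEv_nonneg hp _) m))
      (fun t _ ht => by
        have hPi : ∀ i : Fin n, 0 < prEv p (fun ω => (Y i ω, W ω) = (t.1 i, t.2)) := by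
          intro i
          refine lt_of_lt_of_le ht (prEv_mono hp fun ω h => ?_)
          rw [Prod.mk.injEq]
          have h1 := congrArg Prod.fst h
          have h2 := congrArg Prod.snd h
          exact ⟨by rw [← congrFun h1 i], h2⟩
        have hPW : 0 < prEv p (fun ω => W ω = t.2) :=
          lt_of_lt_of_le ht (prEv_mono hp fun ω h => congrArg Prod.snd h)
        have hProd : 0 < ∏ i : Fin n, prEv p (fun ω => (Y i ω, W ω) = (t.1 i, t.2)) :=
          Finset.prod_pos fun i _ => hPi i
        positivity)
      (sum_prEv_eq_one hsum Tv) one_pos hqsum one_pos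
    calc _ ≤ (1:ℝ) * Real.logb 2 (1 / 1) := hg2
      _ = 0 := by norm_num
  -- data processing + Fano
  have hentZ : ent p Z = Real.logb 2 (Fintype.card 𝒳) := ent_uniform Z hunif
  have hDP : condEnt p Z Tv ≤ condEnt p Z A := by
    have e := condEnt_comp_eq (p := p) Z Tv A (fun t => g t.1 t.2) (fun ω => hg ω)
    calc condEnt p Z Tv = condEnt p Z (fun ω => (Tv ω, A ω)) := e.symm
      _ ≤ condEnt p Z A := condEnt_pair_le hp hsum Z Tv A
  have hfano := fano hp hsum Z A hacc
  have hsumMI : (3 / 4) * Real.logb 2 (Fintype.card 𝒳) - 1 ≤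
      ∑ i : Fin n, mi p (fun ω => (Y i ω, W ω)) Z := by
    have hmi : ∀ i : Fin n, mi p (fun ω => (Y i ω, W ω)) Z =
        ent p Z - condEnt p Z (fun ω => (Y i ω, W ω)) := fun i => mi_symm hp _ Z
    rw [Finset.sum_congr rfl fun i (_ : i ∈ Finset.univ) => hmi i]
    have h1 : (3 / 4) * Real.logb 2 (Fintype.card 𝒳) - 1 ≤ ent p Z - condEnt p Z Tv := by
      rw [hentZ]; linarith
    linarith [hsuper]
  -- pigeonhole
  by_contra hcon
  push_neg at hcon
  have hnpos : (0:ℝ) < n := by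
    have : 0 < n := hn
    exact_mod_cast this
  have hlt : ∑ i : Fin n, mi p (fun ω => (Y i ω, W ω)) Z <
      ∑ _i : Fin n, (1 / (n : ℝ)) * ((3 / 4) * Real.logb 2 (Fintype.card 𝒳) - 1) :=
    Finset.sum_lt_sum_of_nonempty ⟨⟨0, hn⟩, Finset.mem_univ _⟩ fun i _ => hcon i
  rw [Finset.sum_const, Finset.card_univ, Fintype.card_fin, nsmul_eq_mul] at hlt
  have heq : (n : ℝ) * ((1 / (n : ℝ)) * ((3 / 4) * Real.logb 2 (Fintype.card 𝒳) - 1))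
      = (3 / 4) * Real.logb 2 (Fintype.card 𝒳) - 1 := by
    field_simp
  rw [heq] at hlt
  linarith
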